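/- Let G be a finite forest (an acyclic simple graph). Then every connected component of G is either a path component (all of its vertices have degree at most 2) or a complex component (it contains a split vertex, i.e., a vertex of degree at least 3 having at least two tails). -/

import Mathlib

/-- `IsTailThrough G v₀ v₁` says that `v₀` has a tail whose first vertex is `v₁`:
there is a path `(v₀, v₁, …, v_k)` of distinct vertices, `k ≥ 1`, with consecutive
vertices adjacent, `deg v₀ ≥ 3`, `deg v_k = 1`, and `deg v_i = 2` for `0 < i < k`. -/
def IsTailThrough {V : Type*} [Fintype V] (G : SimpleGraph V) [DecidableRel G.Adj]
    (v₀ v₁ : V) : Prop :=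
  ∃ (k : ℕ) (w : ℕ → V), 1 ≤ k ∧ w 0 = v₀ ∧ w 1 = v₁ ∧
    (∀ i, i < k → G.Adj (w i) (w (i + 1))) ∧
    (∀ i j, i ≤ k → j ≤ k → w i = w j → i = j) ∧
    3 ≤ G.degree v₀ ∧ G.degree (w k) = 1 ∧
    (∀ i, 0 < i → i < k → G.degree (w i) = 2)

/-- A split vertex: a vertex of degree at least 3 having at least two tails
(two tails with distinct first vertices). -/
def IsSplitVertex {V : Type*} [Fintype V] (G : SimpleGraph V) [DecidableRel G.Adj]
    (s : V) : Prop :=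
  3 ≤ G.degree s ∧
    ∃ u₁ u₂ : V, u₁ ≠ u₂ ∧ IsTailThrough G s u₁ ∧ IsTailThrough G s u₂

open SimpleGraph Walk

section Helpers

variable {V : Type*} {G : SimpleGraph V}

lemma getVert_mem_support {u v : V} (p : G.Walk u v) (i : ℕ) : p.getVert i ∈ p.support := by
  induction p generalizing i with
  | nil => simp [Walk.getVert]
  | cons h q ih =>
    cases i with
    | zero => simp [Walk.getVert]
    | succ n => simpa [Walk.getVert] using Or.inr (ih n)

lemma IsPath.getVert_inj {u v : V} {p : G.Walk u v} (hp : p.IsPath) {i j : ℕ}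
    (hi : i ≤ p.length) (hj : j ≤ p.length) (h : p.getVert i = p.getVert j) : i = j := by
  induction p generalizing i j with
  | nil => simp only [Walk.length_nil, Nat.le_zero] at hi hj; omega
  | cons ha q ih =>
    rw [Walk.cons_isPath_iff] at hp
    cases i with
    | zero =>
      cases j with
      | zero => rfl
      | succ m =>
        exfalso
        rw [Walk.getVert_zero] at h
        rw [Walk.getVert_cons_succ] at h
        exact hp.2 (h ▸ _root_.getVert_mem_support q m)
    | succ n =>
      cases j with
      | zero =>
        exfalso
        rw [Walk.getVert_zero] at h
        rw [Walk.getVert_cons_succ] at h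
        exact hp.2 (h.symm ▸ _root_.getVert_mem_support q n)
      | succ m =>
        rw [Walk.getVert_cons_succ, Walk.getVert_cons_succ] at h
        simp only [Walk.length_cons] at hi hj
        exact congrArg Nat.succ (ih hp.1 (by omega) (by omega) h)

lemma IsPath.append' {u v w : V} {p : G.Walk u v} {q : G.Walk v w} (hp : p.IsPath)
    (hq : q.IsPath) (hint : ∀ y ∈ p.support, y ∈ q.support → y = v) :
    (p.append q).IsPath := by
  rw [Walk.isPath_def, Walk.support_append]
  refine List.Nodup.append hp.support_nodup ?_ ?_
  · have := hq.support_nodup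
    rw [q.support_eq_cons] at this
    exact (List.nodup_cons.mp this).2
  · intro y hy hy'
    have hyv : y = v := hint y hy ((List.tail_subset _) hy')
    subst hyv
    have := hq.support_nodup
    rw [q.support_eq_cons] at this
    exact (List.nodup_cons.mp this).1 hy'

section
variable [DecidableEq V]

lemma length_take_add {u v w : V} (p : G.Walk v w) (h : u ∈ p.support) :
    (p.takeUntil u h).length + (p.dropUntil u h).length = p.length := by
  have := congr_arg Walk.length (p.take_spec h)
  rwa [Walk.length_append] at this

lemma getVert_one_takeUntil {s t x : V} (q : G.Walk s t) (hx : x ∈ q.support) (hxs : x ≠ s) :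
    (q.takeUntil x hx).getVert 1 = q.getVert 1 := by
  have hlen : 1 ≤ (q.takeUntil x hx).length := by
    by_contra hcon
    push_neg at hcon
    have h0 : (q.takeUntil x hx).length = 0 := by omega
    exact hxs (Walk.eq_of_length_eq_zero h0).symm
  have hspec := q.take_spec hx
  have := Walk.getVert_append (q.takeUntil x hx) (q.dropUntil x hx) 1
  rw [hspec] at this
  rcases Nat.lt_or_ge 1 (q.takeUntil x hx).length with h | h
  · rw [this, if_pos h]
  · have hl : (q.takeUntil x hx).length = 1 := le_antisymm h hlen
    have hc : ¬ (1 < (q.takeUntil x hx).length) := by omega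
    rw [this, if_neg hc]
    have h0 : 1 - (q.takeUntil x hx).length = 0 := by omega
    rw [h0, Walk.getVert_zero, ← hl]
    exact (q.takeUntil x hx).getVert_length

lemma neighbor_eq_penult (hforest : G.IsAcyclic) {r t y : V} (q : G.Walk r t)
    (hq : q.IsPath) (hy : y ∈ q.support) (hadj : G.Adj t y) :
    y = q.getVert (q.length - 1) := by
  have hyt : y ≠ t := fun h => (G.loopless.irrefl t) (h ▸ hadj)
  have hd : (q.dropUntil y hy).IsPath := hq.dropUntil hy
  have he : (Walk.cons hadj.symm Walk.nil : G.Walk y t).IsPath := by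
    simp [Walk.cons_isPath_iff, hyt]
  have heq : q.dropUntil y hy = Walk.cons hadj.symm Walk.nil := by
    have := (SimpleGraph.isAcyclic_iff_path_unique.mp hforest)
      ⟨q.dropUntil y hy, hd⟩ ⟨Walk.cons hadj.symm Walk.nil, he⟩
    exact congrArg Subtype.val this
  have hlen : (q.dropUntil y hy).length = 1 := by rw [heq]; simp
  have hadd := length_take_add q hy
  have hgv := Walk.getVert_append (q.takeUntil y hy) (q.dropUntil y hy) (q.length - 1)
  rw [q.take_spec hy] at hgv
  have hc : ¬ (q.length - 1 < (q.takeUntil y hy).length) := by omega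
  rw [hgv, if_neg hc]
  have : q.length - 1 - (q.takeUntil y hy).length = 0 := by omega
  rw [this, Walk.getVert_zero]

lemma support_inter (hforest : G.IsAcyclic) {r s x u : V} {p : G.Walk r s} (hp : p.IsPath)
    {q : G.Walk s x} (hq : q.IsPath) (hu1 : q.getVert 1 = u) (hu : u ∉ p.support) :
    ∀ y ∈ p.support, y ∈ q.support → y = s := by
  intro y hyp hyq
  by_contra hne
  have ha : (q.takeUntil y hyq).IsPath := hq.takeUntil hyq
  have hb : (p.dropUntil y hyp).IsPath := hp.dropUntil hyp
  have heq : p.dropUntil y hyp = (q.takeUntil y hyq).reverse := by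
    have := (SimpleGraph.isAcyclic_iff_path_unique.mp hforest)
      ⟨p.dropUntil y hyp, hb⟩ ⟨(q.takeUntil y hyq).reverse, ha.reverse⟩
    exact congrArg Subtype.val this
  have heq2 : q.takeUntil y hyq = (p.dropUntil y hyp).reverse := by
    rw [heq, Walk.reverse_reverse]
  have h1 : (q.takeUntil y hyq).getVert 1 = u := by
    rw [getVert_one_takeUntil q hyq hne, hu1]
  rw [heq2, Walk.getVert_reverse] at h1
  exact hu (h1 ▸ (p.support_dropUntil_subset hyp)
    (_root_.getVert_mem_support (p.dropUntil y hyp) ((p.dropUntil y hyp).length - 1)))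

end

lemma getVert_one_concat {s x y : V} (q : G.Walk s x) (h : G.Adj x y) (hlen : 1 ≤ q.length) :
    (q.concat h).getVert 1 = q.getVert 1 := by
  rw [Walk.concat_eq_append]
  rw [Walk.getVert_append]
  rcases Nat.lt_or_ge 1 q.length with h1 | h1
  · rw [if_pos h1]
  · have hl : q.length = 1 := le_antisymm h1 hlen
    have hc : ¬ (1 < q.length) := by omega
    rw [if_neg hc]
    have h0 : 1 - q.length = 0 := by omega
    rw [h0, Walk.getVert_zero, ← hl]
    exact q.getVert_length.symm

lemma IsPath.concat' {s x y : V} {q : G.Walk s x} (hq : q.IsPath) (h : G.Adj x y)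
    (hy : y ∉ q.support) : (q.concat h).IsPath := by
  rw [Walk.concat_eq_append]
  refine IsPath.append' hq ?_ ?_
  · rw [Walk.cons_isPath_iff]
    refine ⟨Walk.IsPath.nil, ?_⟩
    simp only [Walk.support_nil, List.mem_singleton]
    exact (G.ne_of_adj h)
  · intro z hz hz'
    simp only [Walk.support_cons, Walk.support_nil, List.mem_cons, List.mem_singleton] at hz'
    rcases hz' with rfl | (rfl | h0)
    · rfl
    · exact absurd hz hy
    · exact absurd h0 List.not_mem_nil

section
variable [Fintype V] [DecidableRel G.Adj]

lemma degree_eq_one {t z : V} (hadj : G.Adj t z) (huniq : ∀ y, G.Adj t y → y = z) :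
    G.degree t = 1 := by
  have : G.neighborFinset t = {z} := by
    ext y
    simp only [SimpleGraph.mem_neighborFinset, Finset.mem_singleton]
    exact ⟨fun h => huniq y h, fun h => h ▸ hadj⟩
  rw [← SimpleGraph.card_neighborFinset_eq_degree, this, Finset.card_singleton]

lemma two_le_degree {t a b : V} [DecidableEq V] (ha : G.Adj t a) (hb : G.Adj t b) (hab : a ≠ b) :
    2 ≤ G.degree t := by
  have hsub : ({a, b} : Finset V) ⊆ G.neighborFinset t := by
    intro y hy
    simp only [Finset.mem_insert, Finset.mem_singleton] at hy
    rcases hy with rfl | rfl <;> simp [SimpleGraph.mem_neighborFinset, ha, hb]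
  calc 2 = ({a, b} : Finset V).card := (Finset.card_pair hab).symm
    _ ≤ (G.neighborFinset t).card := Finset.card_le_card hsub
    _ = G.degree t := G.card_neighborFinset_eq_degree t

lemma buildTail [DecidableEq V] (hforest : G.IsAcyclic)
    {r s : V} {p : G.Walk r s} (hp : p.IsPath)
    (hmax : ∀ (x : V) (p' : G.Walk r x), p'.IsPath → 3 ≤ G.degree x → p'.length ≤ p.length)
    (hs : 3 ≤ G.degree s) {u : V} (hadj : G.Adj s u) (hu : u ∉ p.support) :
    IsTailThrough G s u := by
  classical
  set N := Fintype.card V with hN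
  set P : ℕ → Prop := fun n => ∃ (x : V) (q : G.Walk s x),
    q.IsPath ∧ 1 ≤ q.length ∧ q.getVert 1 = u ∧ q.length = n with hPdef
  have hP1 : P 1 := by
    refine ⟨u, Walk.cons hadj Walk.nil, ?_, by simp, rfl, by simp⟩
    rw [Walk.cons_isPath_iff]
    refine ⟨Walk.IsPath.nil, ?_⟩
    simp only [Walk.support_nil, List.mem_singleton]
    exact (G.ne_of_adj hadj)
  have hne : Nonempty V := ⟨s⟩
  have h1N : 1 ≤ N := Fintype.card_pos
  have hPn : P (Nat.findGreatest P N) := Nat.findGreatest_spec h1N hP1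
  obtain ⟨x, q, hq, hq1, hqu, hqlen⟩ := hPn
  have hmaxq : ∀ m, P m → m ≤ Nat.findGreatest P N := by
    intro m hm
    obtain ⟨x', q', hq', -, -, hlen'⟩ := id hm
    exact Nat.le_findGreatest (hlen' ▸ le_of_lt hq'.length_lt) hm
  -- branch is clean
  have hclean : ∀ z ∈ q.support, z ≠ s → G.degree z ≤ 2 := by
    intro z hz hzs
    by_contra h3
    push_neg at h3
    have ha := hq.takeUntil hz
    have happ : (p.append (q.takeUntil z hz)).IsPath :=
      IsPath.append' hp ha (fun y hy hy' =>
        support_inter hforest hp hq hqu hu y hy ((q.support_takeUntil_subset hz) hy'))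
    have hle := hmax z (p.append (q.takeUntil z hz)) happ (by omega)
    rw [Walk.length_append] at hle
    have hpos : 1 ≤ (q.takeUntil z hz).length := by
      by_contra hcon
      push_neg at hcon
      have h0 : (q.takeUntil z hz).length = 0 := by omega
      exact hzs (Walk.eq_of_length_eq_zero h0).symm
    omega
  have hxs : x ≠ s := by
    intro he
    have := IsPath.getVert_inj hq (Nat.zero_le _) (le_refl q.length)
      (by rw [Walk.getVert_zero, Walk.getVert_length, he])
    omega
  -- endpoint has degree one
  have hpen_adj : G.Adj x (q.getVert (q.length - 1)) := by
    have h1 : q.length - 1 < q.length := by omega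
    have := q.adj_getVert_succ h1
    have he : q.length - 1 + 1 = q.length := by omega
    rw [he, Walk.getVert_length] at this
    exact this.symm
  have hdegx : G.degree x = 1 := by
    refine degree_eq_one hpen_adj ?_
    intro y hy
    by_cases hymem : y ∈ q.support
    · exact neighbor_eq_penult hforest q hq hymem hy
    · exfalso
      have hcp : (q.concat hy).IsPath := IsPath.concat' hq hy hymem
      have hPext : P (q.length + 1) :=
        ⟨y, q.concat hy, hcp, by rw [Walk.length_concat]; omega,
          by rw [getVert_one_concat q hy hq1]; exact hqu, Walk.length_concat _ _⟩
      have := hmaxq _ hPext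
      omega
  refine ⟨q.length, q.getVert, hq1, Walk.getVert_zero q, hqu, ?_, ?_, hs, ?_, ?_⟩
  · intro i hi
    exact q.adj_getVert_succ hi
  · intro i j hi hj hij
    exact IsPath.getVert_inj hq hi hj hij
  · rw [Walk.getVert_length]; exact hdegx
  · intro i h0i hik
    refine le_antisymm ?_ ?_
    · refine hclean _ (_root_.getVert_mem_support q i) ?_
      intro he
      have : q.getVert i = q.getVert 0 := by rw [Walk.getVert_zero, he]
      have := IsPath.getVert_inj hq (by omega) (Nat.zero_le _) this
      omega
    · have ha : G.Adj (q.getVert i) (q.getVert (i - 1)) := by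
        have h1 : i - 1 < q.length := by omega
        have := q.adj_getVert_succ h1
        have he : i - 1 + 1 = i := by omega
        rw [he] at this
        exact this.symm
      have hb : G.Adj (q.getVert i) (q.getVert (i + 1)) := q.adj_getVert_succ hik
      refine two_le_degree ha hb ?_
      intro he
      have := IsPath.getVert_inj hq (by omega) (by omega) he
      omega

end

end Helpers

/-- In a finite forest, every connected component is either a path component (all of
its vertices have degree at most 2) or a complex component (it contains a split
vertex). -/
theorem component_path_or_complex {V : Type*} [Fintype V] (G : SimpleGraph V)
    [DecidableRel G.Adj] (hforest : G.IsAcyclic) (C : G.ConnectedComponent) :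
    (∀ v : V, G.connectedComponentMk v = C → G.degree v ≤ 2) ∨
    (∃ s : V, G.connectedComponentMk s = C ∧ IsSplitVertex G s) := by
  classical
  by_cases h : ∀ v : V, G.connectedComponentMk v = C → G.degree v ≤ 2
  · exact Or.inl h
  right
  push_neg at h
  obtain ⟨r, hrC, hr2⟩ := h
  have hr3 : 3 ≤ G.degree r := by omega
  set N := Fintype.card V with hN
  set P : ℕ → Prop := fun n => ∃ (x : V) (p : G.Walk r x),
    p.IsPath ∧ 3 ≤ G.degree x ∧ p.length = n with hPdef
  have hP0 : P 0 := ⟨r, Walk.nil, Walk.IsPath.nil, hr3, rfl⟩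
  have hPn : P (Nat.findGreatest P N) := Nat.findGreatest_spec (Nat.zero_le N) hP0
  obtain ⟨s, p, hp, hs, hplen⟩ := hPn
  have hmax : ∀ (x : V) (p' : G.Walk r x), p'.IsPath → 3 ≤ G.degree x →
      p'.length ≤ p.length := by
    intro x p' hp' hx
    rw [hplen]
    exact Nat.le_findGreatest (le_of_lt hp'.length_lt) ⟨x, p', hp', hx, rfl⟩
  have hsC : G.connectedComponentMk s = C := by
    rw [← hrC]
    exact SimpleGraph.ConnectedComponent.sound ⟨p⟩ ▸ rfl
  -- at most one neighbor of s lies on p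
  have hinter : ((G.neighborFinset s) ∩ p.support.toFinset).card ≤ 1 := by
    rw [Finset.card_le_one]
    intro a ha b hb
    simp only [Finset.mem_inter, SimpleGraph.mem_neighborFinset, List.mem_toFinset] at ha hb
    rw [neighbor_eq_penult hforest p hp ha.2 ha.1,
      neighbor_eq_penult hforest p hp hb.2 hb.1]
  have hcard : 1 < ((G.neighborFinset s) \ p.support.toFinset).card := by
    have h1 : (G.neighborFinset s) \ p.support.toFinset
        = (G.neighborFinset s) \ ((G.neighborFinset s) ∩ p.support.toFinset) := by
      rw [Finset.sdiff_inter_self_left]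
    have h2 := Finset.le_card_sdiff ((G.neighborFinset s) ∩ p.support.toFinset)
      (G.neighborFinset s)
    rw [← h1] at h2
    have h3 : (G.neighborFinset s).card = G.degree s := G.card_neighborFinset_eq_degree s
    omega
  obtain ⟨u₁, hu₁, u₂, hu₂, hne⟩ := Finset.one_lt_card.mp hcard
  simp only [Finset.mem_sdiff, SimpleGraph.mem_neighborFinset, List.mem_toFinset] at hu₁ hu₂
  refine ⟨s, hsC, hs, u₁, u₂, hne, ?_, ?_⟩
  · exact buildTail hforest hp hmax hs hu₁.1 hu₁.2
  · exact buildTail hforest hp hmax hs hu₂.1 hu₂.2
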